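/- There exists a family of instances (one for each m) of the online load balancing problem on m related machines such that any deterministic online algorithm producing a weakly well-behaved schedule at every step has makespan at least c·√m times the optimal offline makespan, for some universal constant c > 0. Concretely, with speeds s_i = 1 + 2^{i−m} and jobs of sizes s_1,…,s_m arriving in increasing order, the optimal makespan is at most 1 while any weakly well-behaved online schedule has makespan Ω(√m). -/

import Mathlib

open Finset

private lemma geom_range (m n : ℕ) :
    ∑ k ∈ range n, (2:ℝ) ^ ((k:ℤ) + 1 - m) = 2 ^ ((n:ℤ) + 1 - m) - 2 ^ (1 - (m:ℤ)) := by
  induction n with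
  | zero => norm_num
  | succ n ih =>
      rw [sum_range_succ, ih]
      have h1 : ((n+1:ℕ):ℤ) + 1 - m = ((n:ℤ) + 1 - m) + 1 := by push_cast; ring
      rw [h1, zpow_add_one₀ (two_ne_zero)]
      ring

private lemma filter_lt_sum_eq (m jn : ℕ) (hj : jn ≤ m) (g : ℕ → ℝ) :
    ∑ x ∈ univ.filter (fun x : Fin m => (x : ℕ) < jn), g (x : ℕ)
      = ∑ k ∈ range jn, g k := by
  rw [sum_filter, Fin.sum_univ_eq_sum_range (fun k => if k < jn then g k else 0), ← sum_filter]
  congr 1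
  ext k
  simp only [mem_filter, mem_range]
  omega

private lemma key_lemma (m : ℕ) (s : Fin m → ℝ)
    (hs : ∀ i : Fin m, s i = 1 + 2 ^ (((i : ℕ) : ℤ) + 1 - (m : ℤ)))
    (A : Fin m → Fin m)
    (H : ∀ t ≤ m, ∀ i i' : Fin m, i < i' →
        (∑ j ∈ univ.filter (fun j : Fin m => (j : ℕ) < t ∧ A j = i), s j)
          ≤ ∑ j ∈ univ.filter (fun j : Fin m => (j : ℕ) < t ∧ A j = i'), s j)
    (i i' : Fin m) (hii' : i < i')
    (hNi : (univ.filter (fun j : Fin m => A j = i)).card ≠ 0) :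
    (univ.filter (fun j : Fin m => A j = i)).card
      < (univ.filter (fun j : Fin m => A j = i')).card := by
  set ε : Fin m → ℝ := fun x => (2:ℝ) ^ (((x : ℕ) : ℤ) + 1 - (m : ℤ)) with hε
  have hεpos : ∀ x : Fin m, 0 < ε x := fun x => zpow_pos (by norm_num) _
  have hsum : ∀ T : Finset (Fin m), ∑ j' ∈ T, s j' = T.card + ∑ j' ∈ T, ε j' := by
    intro T
    have : ∀ j' ∈ T, s j' = 1 + ε j' := fun j' _ => hs j'
    rw [sum_congr rfl this, sum_add_distrib, sum_const, nsmul_eq_mul, mul_one]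
  set S := univ.filter (fun j : Fin m => A j = i) with hS
  have hSne : S.Nonempty := card_pos.mp (Nat.pos_of_ne_zero hNi)
  obtain ⟨j, hjS, hjmax⟩ := S.exists_max_image (fun x => (x : ℕ)) hSne
  have hAj : A j = i := by simpa [hS] using hjS
  have ht : (j : ℕ) + 1 ≤ m := j.isLt
  -- LHS filter set equals S
  have h1 : univ.filter (fun j' : Fin m => (j' : ℕ) < (j : ℕ) + 1 ∧ A j' = i) = S := by
    ext x
    simp only [hS, mem_filter, mem_univ, true_and]
    constructor
    · exact fun h => h.2
    · intro h
      refine ⟨?_, h⟩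
      have := hjmax x (by simp [hS, h])
      omega
  have hH := H ((j : ℕ) + 1) ht i i' hii'
  rw [h1] at hH
  set T := univ.filter (fun j' : Fin m => (j' : ℕ) < (j : ℕ) + 1 ∧ A j' = i') with hT
  -- S side lower bound
  have hSlb : (S.card : ℝ) + ε j ≤ ∑ j' ∈ S, s j' := by
    rw [hsum S]
    have : ε j ≤ ∑ j' ∈ S, ε j' :=
      single_le_sum (fun x _ => (hεpos x).le) hjS
    linarith
  -- T side upper bound
  have hTsub : T ⊆ univ.filter (fun x : Fin m => (x : ℕ) < (j : ℕ)) := by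
    intro x hx
    simp only [hT, mem_filter, mem_univ, true_and] at hx ⊢
    have hxne : x ≠ j := by
      intro h; rw [h, hAj] at hx; exact absurd hx.2 (ne_of_lt hii')
    have : (x : ℕ) ≠ (j : ℕ) := fun h => hxne (Fin.ext h)
    omega
  have hTε : ∑ j' ∈ T, ε j' ≤ ε j - 2 ^ (1 - (m:ℤ)) := by
    have h2 : ∑ j' ∈ T, ε j' ≤ ∑ x ∈ univ.filter (fun x : Fin m => (x : ℕ) < (j : ℕ)), ε x :=
      sum_le_sum_of_subset_of_nonneg hTsub (fun x _ _ => (hεpos x).le)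
    have h3 : ∑ x ∈ univ.filter (fun x : Fin m => (x : ℕ) < (j : ℕ)), ε x
        = 2 ^ (((j:ℕ):ℤ) + 1 - m) - 2 ^ (1 - (m:ℤ)) := by
      rw [hε]
      rw [filter_lt_sum_eq m (j : ℕ) (le_of_lt j.isLt) (fun k => (2:ℝ) ^ ((k:ℤ) + 1 - m))]
      exact geom_range m (j : ℕ)
    rw [h3] at h2
    exact h2
  have hTcard : (T.card : ℝ) ≤ ((univ.filter (fun j : Fin m => A j = i')).card : ℝ) := by
    have : T ⊆ univ.filter (fun j : Fin m => A j = i') := by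
      intro x hx
      simp only [hT, mem_filter, mem_univ, true_and] at hx ⊢
      exact hx.2
    exact_mod_cast card_le_card this
  have hTub : ∑ j' ∈ T, s j' ≤ ((univ.filter (fun j : Fin m => A j = i')).card : ℝ)
      + ε j - 2 ^ (1 - (m:ℤ)) := by
    rw [hsum T]; linarith
  have hpow : (0:ℝ) < 2 ^ (1 - (m:ℤ)) := zpow_pos (by norm_num) _
  have : (S.card : ℝ) < ((univ.filter (fun j : Fin m => A j = i')).card : ℝ) := by
    linarith
  exact_mod_cast this


private lemma main_bound (m : ℕ) (hm : 1 ≤ m) (s : Fin m → ℝ)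
    (hs : ∀ i : Fin m, s i = 1 + 2 ^ (((i : ℕ) : ℤ) + 1 - (m : ℤ)))
    (A : Fin m → Fin m)
    (key : ∀ i i' : Fin m, i < i' →
      (univ.filter (fun j : Fin m => A j = i)).card ≠ 0 →
      (univ.filter (fun j : Fin m => A j = i)).card
        < (univ.filter (fun j : Fin m => A j = i')).card) :
    ∃ i : Fin m, (1/2 : ℝ) * Real.sqrt m ≤
        (∑ j ∈ univ.filter (fun j : Fin m => A j = i), s j) / s i := by
  set N : Fin m → ℕ := fun i => (univ.filter (fun j : Fin m => A j = i)).card with hN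
  have hlastlt : m - 1 < m := by omega
  set last : Fin m := ⟨m - 1, hlastlt⟩ with hlast
  -- downward claim
  have claim : ∀ k : ℕ, ∀ i : Fin m, (i : ℕ) + k = m - 1 → N i = 0 ∨ N i + k ≤ N last := by
    intro k
    induction k with
    | zero =>
        intro i hi
        have : i = last := Fin.ext (by simp only [hlast]; omega)
        right; rw [this]; omega
    | succ k ih =>
        intro i hi
        by_cases h0 : N i = 0
        · exact Or.inl h0
        · have hi1 : (i : ℕ) + 1 < m := by omega
          set i' : Fin m := ⟨(i : ℕ) + 1, hi1⟩ with hi'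
          have hlt : i < i' := by
            rw [Fin.lt_def]; simp [hi']
          have hkey : N i < N i' := key i i' hlt h0
          have hvi' : (i' : ℕ) = (i : ℕ) + 1 := rfl
          have hIH := ih i' (by omega)
          right
          rcases hIH with h | h
          · omega
          · omega
  have htot : ∑ i : Fin m, N i = m := by
    have := Finset.card_eq_sum_card_fiberwise (f := A) (s := univ) (t := univ)
      (fun x _ => mem_univ _)
    simpa [hN] using this.symm
  -- card of nonzero set ≤ N last
  set P := univ.filter (fun i : Fin m => N i ≠ 0) with hP
  have hmem : ∀ i ∈ P, m ≤ (i : ℕ) + N last ∧ N i ≤ N last := by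
    intro i hiP
    have hi0 : N i ≠ 0 := by simpa [hP] using hiP
    have := claim (m - 1 - (i : ℕ)) i (by omega)
    rcases this with h | h
    · exact absurd h hi0
    · constructor <;> omega
  have hcardP : P.card ≤ N last := by
    have hmm1 : ∀ a ∈ P, (fun i : Fin m => (i : ℕ) - (m - N last)) a ∈ range (N last) := by
      intro i hiP
      have := (hmem i hiP).1
      have hi2 : (i : ℕ) < m := i.isLt
      simp only [mem_range]
      omega
    have hinj : Set.InjOn (fun i : Fin m => (i : ℕ) - (m - N last)) P := by
      intro a ha b hb hab
      have h1 := (hmem a (by simpa using ha)).1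
      have h2 := (hmem b (by simpa using hb)).1
      have : (a : ℕ) = (b : ℕ) := by
        simp only at hab
        omega
      exact Fin.ext this
    have : P.card ≤ (range (N last)).card :=
      Finset.card_le_card_of_injOn _ hmm1 hinj
    simpa using this
  have hm2 : m ≤ N last * N last := by
    have h1 : ∑ i ∈ P, N i = ∑ i : Fin m, N i := by
      rw [hP]
      exact sum_filter_ne_zero univ
    have h2 : ∑ i ∈ P, N i ≤ ∑ _i ∈ P, N last :=
      sum_le_sum (fun i hi => (hmem i hi).2)
    rw [sum_const, smul_eq_mul] at h2
    have h3 : P.card * N last ≤ N last * N last :=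
      Nat.mul_le_mul_right _ hcardP
    omega
  -- sqrt m ≤ N last
  have hsqrt : Real.sqrt m ≤ (N last : ℝ) := by
    have h1 : (m : ℝ) ≤ ((N last : ℝ)) ^ 2 := by
      rw [sq]
      exact_mod_cast hm2
    calc Real.sqrt m ≤ Real.sqrt ((N last : ℝ) ^ 2) := Real.sqrt_le_sqrt h1
      _ = (N last : ℝ) := Real.sqrt_sq (Nat.cast_nonneg _)
  -- load on last machine
  have hload : (N last : ℝ) ≤ ∑ j ∈ univ.filter (fun j : Fin m => A j = last), s j := by
    have h1 : ∀ j ∈ univ.filter (fun j : Fin m => A j = last), (1:ℝ) ≤ s j := by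
      intro j _
      rw [hs j]
      have : (0:ℝ) < 2 ^ (((j:ℕ):ℤ) + 1 - (m:ℤ)) := zpow_pos (by norm_num) _
      linarith
    calc (N last : ℝ) = ∑ _j ∈ univ.filter (fun j : Fin m => A j = last), (1:ℝ) := by
          rw [sum_const, nsmul_eq_mul, mul_one]
      _ ≤ _ := sum_le_sum h1
  have hslast : s last = 2 := by
    rw [hs last]
    have : ((((last : Fin m) : ℕ)) : ℤ) + 1 - (m : ℤ) = 0 := by
      simp only [hlast]
      omega
    rw [this]
    norm_num
  refine ⟨last, ?_⟩
  rw [hslast]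
  have : Real.sqrt m ≤ ∑ j ∈ univ.filter (fun j : Fin m => A j = last), s j :=
    le_trans hsqrt hload
  linarith


/-- Hardness of well-behaved online load balancing: there is a universal
`c > 0` and, for each `m`, an instance (speeds `s i = 1 + 2^(i+1-m)`, jobs of
sizes `s 0, …, s (m-1)` arriving in increasing order) whose optimal makespan
is at most `1`, while every online schedule that is weakly well-behaved after
every prefix has makespan at least `c·√m`. -/
theorem stmt_6 :
    ∃ c : ℝ, 0 < c ∧ ∀ m : ℕ, 1 ≤ m →
      ∀ s : Fin m → ℝ,
        (∀ i : Fin m, s i = 1 + 2 ^ (((i : ℕ) : ℤ) + 1 - (m : ℤ))) →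
        ((∃ B : Fin m → Fin m, ∀ i : Fin m,
            (∑ j ∈ Finset.univ.filter (fun j : Fin m => B j = i), s j) / s i ≤ 1) ∧
         ∀ A : Fin m → Fin m,
           (∀ t ≤ m, ∀ i i' : Fin m, i < i' →
              (∑ j ∈ Finset.univ.filter (fun j : Fin m => (j : ℕ) < t ∧ A j = i), s j)
                ≤ ∑ j ∈ Finset.univ.filter (fun j : Fin m => (j : ℕ) < t ∧ A j = i'), s j) →
           ∃ i : Fin m,
             c * Real.sqrt m ≤
               (∑ j ∈ Finset.univ.filter (fun j : Fin m => A j = i), s j) / s i) := by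
  refine ⟨1/2, by norm_num, ?_⟩
  intro m hm s hs
  constructor
  · refine ⟨fun i => i, fun i => ?_⟩
    have h1 : Finset.univ.filter (fun j : Fin m => j = i) = {i} := by
      ext x; simp
    rw [h1, Finset.sum_singleton]
    have hpos : (0:ℝ) < s i := by
      rw [hs i]
      have : (0:ℝ) < 2 ^ (((i:ℕ):ℤ) + 1 - (m:ℤ)) := zpow_pos (by norm_num) _
      linarith
    exact le_of_eq (div_self (ne_of_gt hpos))
  · intro A H
    exact main_bound m hm s hs A (fun i i' hii' h0 => key_lemma m s hs A H i i' hii' h0)
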